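/- Let k > 0 and let f, g : [0, k] → ℝ be twice continuously differentiable with f'(s)² + g'(s)² = 1 for all s ∈ [0, k]. Then for every t ∈ (−1, 1) and every s ∈ [0, k], the T-deformed curve p_t satisfies ‖p_t''(s)‖² = t²·f''(s)² / ((1−t²)·f'(s)² + g'(s)²); note that the denominator (1−t²)·f'(s)² + g'(s)² is strictly positive for |t| < 1. Since p_t is parametrized by arc length, this gives the squared unsigned curvature of the deformed profile curve. -/

import Mathlib

/-- The isometric deformation of T-type of a planar profile curve
`s ↦ (f s, g s)` with deformation parameter `t`, as a curve in the Euclidean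
plane (modelled as `WithLp 2 (ℝ × ℝ)` so that `‖·‖` is the Euclidean norm). -/
noncomputable def Tdeform (f g : ℝ → ℝ) (t : ℝ) : ℝ → WithLp 2 (ℝ × ℝ) :=
  fun s => (WithLp.equiv 2 (ℝ × ℝ)).symm
    (t * f s,
      ∫ u in (0 : ℝ)..s,
        Real.sqrt ((1 - t ^ 2) * deriv f u ^ 2 + deriv g u ^ 2))

/-- The squared unsigned curvature of the T-deformed profile curve:
`‖p_t''(s)‖² = t²·f''(s)² / ((1−t²)·f'(s)² + g'(s)²)`, the denominator being
strictly positive for `|t| < 1`. -/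
theorem Tdeform_curvature (k : ℝ) (hk : 0 < k) (f g : ℝ → ℝ)
    (hf : ContDiff ℝ 2 f) (hg : ContDiff ℝ 2 g)
    (hunit : ∀ s ∈ Set.Icc (0 : ℝ) k, deriv f s ^ 2 + deriv g s ^ 2 = 1) :
    ∀ t ∈ Set.Ioo (-1 : ℝ) 1, ∀ s ∈ Set.Icc (0 : ℝ) k,
      0 < (1 - t ^ 2) * deriv f s ^ 2 + deriv g s ^ 2 ∧
      ‖deriv (deriv (Tdeform f g t)) s‖ ^ 2 =
        t ^ 2 * deriv (deriv f) s ^ 2 /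
          ((1 - t ^ 2) * deriv f s ^ 2 + deriv g s ^ 2) := by
  have h21 : (2 : WithTop ℕ∞) = 1 + 1 := by norm_num
  rw [h21] at hf hg
  have hf1 : ContDiff ℝ 1 (deriv f) := (contDiff_succ_iff_deriv.mp hf).2.2
  have hg1 : ContDiff ℝ 1 (deriv g) := (contDiff_succ_iff_deriv.mp hg).2.2
  have hfd : Differentiable ℝ f := (contDiff_succ_iff_deriv.mp hf).1
  have hf'd : Differentiable ℝ (deriv f) := hf1.differentiable one_ne_zero
  have hg'd : Differentiable ℝ (deriv g) := hg1.differentiable one_ne_zero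
  have hf'c : Continuous (deriv f) := hf'd.continuous
  have hg'c : Continuous (deriv g) := hg'd.continuous
  have hf''c : Continuous (deriv (deriv f)) := hf1.continuous_deriv le_rfl
  have hg''c : Continuous (deriv (deriv g)) := hg1.continuous_deriv le_rfl
  -- orthogonality on [0,k]
  have horth : ∀ s ∈ Set.Icc (0 : ℝ) k,
      deriv f s * deriv (deriv f) s + deriv g s * deriv (deriv g) s = 0 := by
    set φ : ℝ → ℝ := fun s =>
      deriv f s * deriv (deriv f) s + deriv g s * deriv (deriv g) s with hφdef
    have hφc : Continuous φ :=
      ((hf'c.mul hf''c).add (hg'c.mul hg''c))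
    have hq : ∀ s, HasDerivAt (fun u => deriv f u ^ 2 + deriv g u ^ 2) (2 * φ s) s := by
      intro s
      have h1 := ((hf'd s).hasDerivAt).fun_pow 2
      have h2 := ((hg'd s).hasDerivAt).fun_pow 2
      have h3 := h1.fun_add h2
      refine h3.congr_deriv ?_
      simp [hφdef]; ring
    have hinter : Set.EqOn φ 0 (Set.Ioo (0 : ℝ) k) := by
      intro s hs
      have hev : (fun u => deriv f u ^ 2 + deriv g u ^ 2) =ᶠ[nhds s] fun _ => (1 : ℝ) := by
        filter_upwards [Ioo_mem_nhds hs.1 hs.2] with u hu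
        exact hunit u (Set.Ioo_subset_Icc_self hu)
      have h0 : deriv (fun u => deriv f u ^ 2 + deriv g u ^ 2) s =
          deriv (fun _ => (1 : ℝ)) s := hev.deriv_eq
      rw [deriv_const] at h0
      have := (hq s).deriv
      rw [this] at h0
      have : φ s = 0 := by linarith
      simpa using this
    have hclos : Set.EqOn φ 0 (Set.Icc (0 : ℝ) k) := by
      have := hinter.closure hφc continuous_const
      rwa [closure_Ioo hk.ne] at this
    intro s hs
    simpa [hφdef] using hclos hs
  intro t ht s₀ hs₀
  have ht2 : t ^ 2 < 1 := by nlinarith [ht.1, ht.2]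
  set c : ℝ → ℝ := fun u => (1 - t ^ 2) * deriv f u ^ 2 + deriv g u ^ 2 with hcdef
  have hcpos : ∀ s ∈ Set.Icc (0 : ℝ) k, 0 < c s := by
    intro s hs
    have h1 := hunit s hs
    have h2 : deriv f s ^ 2 ≤ 1 := by nlinarith [sq_nonneg (deriv g s)]
    have h3 : (0 : ℝ) ≤ t ^ 2 := sq_nonneg t
    simp only [hcdef]
    nlinarith [mul_le_of_le_one_right h3 h2]
  have hcc : Continuous c := by
    simp only [hcdef]
    fun_prop
  set E := WithLp.prodContinuousLinearEquiv 2 ℝ ℝ ℝ with hEdef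
  -- first derivative everywhere
  have hDeriv1 : ∀ s, HasDerivAt (Tdeform f g t)
      (E.symm (t * deriv f s, Real.sqrt (c s))) s := by
    intro s
    have h1 : HasDerivAt (fun u => t * f u) (t * deriv f s) s :=
      ((hfd s).hasDerivAt).const_mul t
    have h2 : HasDerivAt (fun u => ∫ x in (0 : ℝ)..u, Real.sqrt (c x))
        (Real.sqrt (c s)) s :=
      intervalIntegral.integral_hasDerivAt_right
        ((hcc.sqrt).intervalIntegrable 0 s)
        ((hcc.sqrt).stronglyMeasurableAtFilter _ _)
        (hcc.sqrt).continuousAt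
    have h3 := h1.prodMk h2
    exact (E.symm.hasFDerivAt).comp_hasDerivAt s h3
  have hD1 : deriv (Tdeform f g t) =
      fun s => E.symm (t * deriv f s, Real.sqrt (c s)) :=
    funext fun s => (hDeriv1 s).deriv
  have hpos : 0 < c s₀ := hcpos s₀ hs₀
  refine ⟨hpos, ?_⟩
  -- second derivative at s₀
  have hcd : HasDerivAt c
      (2 * ((1 - t ^ 2) * (deriv f s₀ * deriv (deriv f) s₀)
        + deriv g s₀ * deriv (deriv g) s₀)) s₀ := by
    have h1 := (((hf'd s₀).hasDerivAt).fun_pow 2).const_mul (1 - t ^ 2)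
    have h2 := ((hg'd s₀).hasDerivAt).fun_pow 2
    have h3 := h1.fun_add h2
    refine h3.congr_deriv ?_
    push_cast
    ring
  have hsq : HasDerivAt (fun u => Real.sqrt (c u))
      ((2 * ((1 - t ^ 2) * (deriv f s₀ * deriv (deriv f) s₀)
        + deriv g s₀ * deriv (deriv g) s₀)) / (2 * Real.sqrt (c s₀))) s₀ :=
    hcd.sqrt hpos.ne'
  have h1 : HasDerivAt (fun u => t * deriv f u) (t * deriv (deriv f) s₀) s₀ :=
    ((hf'd s₀).hasDerivAt).const_mul t
  have h2 := h1.prodMk hsq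
  have hD2 : deriv (deriv (Tdeform f g t)) s₀ =
      E.symm (t * deriv (deriv f) s₀,
        (2 * ((1 - t ^ 2) * (deriv f s₀ * deriv (deriv f) s₀)
          + deriv g s₀ * deriv (deriv g) s₀)) / (2 * Real.sqrt (c s₀))) := by
    rw [hD1]
    exact ((E.symm.hasFDerivAt).comp_hasDerivAt s₀ h2).deriv
  rw [hD2, WithLp.prod_norm_sq_eq_of_L2]
  have hfst : (E.symm (t * deriv (deriv f) s₀,
      (2 * ((1 - t ^ 2) * (deriv f s₀ * deriv (deriv f) s₀)
        + deriv g s₀ * deriv (deriv g) s₀)) / (2 * Real.sqrt (c s₀)))).fst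
      = t * deriv (deriv f) s₀ := rfl
  have hsnd : (E.symm (t * deriv (deriv f) s₀,
      (2 * ((1 - t ^ 2) * (deriv f s₀ * deriv (deriv f) s₀)
        + deriv g s₀ * deriv (deriv g) s₀)) / (2 * Real.sqrt (c s₀)))).snd
      = (2 * ((1 - t ^ 2) * (deriv f s₀ * deriv (deriv f) s₀)
        + deriv g s₀ * deriv (deriv g) s₀)) / (2 * Real.sqrt (c s₀)) := rfl
  rw [hfst, hsnd, Real.norm_eq_abs, Real.norm_eq_abs, sq_abs, sq_abs]
  -- algebra
  set A := deriv f s₀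
  set B := deriv (deriv f) s₀
  set C := deriv g s₀
  set D := deriv (deriv g) s₀
  have hCD : C * D = -(A * B) := by
    have := horth s₀ hs₀
    linarith
  have hc0 : c s₀ = 1 - t ^ 2 * A ^ 2 := by
    have := hunit s₀ hs₀
    simp only [hcdef]
    nlinarith
  have hsqc : Real.sqrt (c s₀) ^ 2 = c s₀ := Real.sq_sqrt hpos.le
  have hsne : Real.sqrt (c s₀) ≠ 0 := (Real.sqrt_pos.mpr hpos).ne'
  have hgoal : (1 - t ^ 2) * A ^ 2 + C ^ 2 = c s₀ := rfl
  rw [hgoal]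
  have hE2 : (1 - t ^ 2) * (A * B) + C * D = -(t ^ 2 * (A * B)) := by
    linear_combination hCD
  field_simp
  rw [show B * (1 - t ^ 2) * A + C * D = -(t ^ 2 * (A * B)) by linear_combination hE2, hsqc]
  linear_combination (t ^ 2 * B ^ 2 * c s₀) * hc0
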